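/- Let R be a p×d random matrix with independent columns r₁,…,r_d, each satisfying the convex concentration property with constant K. Then for every unit vector u ∈ ℝ^d, the random vector Ru = Σᵢ uᵢ rᵢ satisfies the convex concentration property with constant C·K for an absolute constant C. -/

import Mathlib

open MeasureTheory ProbabilityTheory Real Finset

noncomputable def vecNorm {ι : Type*} [Fintype ι] (x : ι → ℝ) : ℝ :=
  Real.sqrt (∑ i, (x i) ^ 2)

noncomputable def frobNorm {m ι : Type*} [Fintype m] [Fintype ι] (X : Matrix m ι ℝ) : ℝ :=
  Real.sqrt (∑ i, ∑ j, (X i j) ^ 2)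

noncomputable def specNorm {m ι : Type*} [Fintype m] [Fintype ι] (X : Matrix m ι ℝ) : ℝ :=
  sSup {c : ℝ | ∃ u : ι → ℝ, vecNorm u = 1 ∧ c = vecNorm (X.mulVec u)}

noncomputable def stableRank {m ι : Type*} [Fintype m] [Fintype ι] (X : Matrix m ι ℝ) : ℝ :=
  frobNorm X ^ 2 / specNorm X ^ 2

def IsSparse {ι : Type*} [Fintype ι] (k : ℕ) (u : ι → ℝ) : Prop :=
  (Finset.univ.filter fun i => u i ≠ 0).card ≤ k

def SubgaussianLe {Ω : Type*} [MeasurableSpace Ω] (μ : Measure Ω) (x : Ω → ℝ) (K : ℝ) : Prop :=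
  ∀ a : ℝ, 1 ≤ a → (∫ ω, |x ω| ^ a ∂μ) ^ (1 / a) ≤ K * Real.sqrt a
/-- Convex concentration property with constant K (Lipschitz w.r.t. the
Euclidean norm, spelled out via `vecNorm`). -/
def CCP {Ω : Type*} [MeasurableSpace Ω] (μ : MeasureTheory.Measure Ω) {p : ℕ}
    (x : Ω → Fin p → ℝ) (K : ℝ) : Prop :=
  ∀ φ : (Fin p → ℝ) → ℝ, ConvexOn ℝ Set.univ φ →
    (∀ y z : Fin p → ℝ, |φ y - φ z| ≤ vecNorm (y - z)) →
    MeasureTheory.Integrable (fun ω => φ (x ω)) μ ∧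
    ∀ t : ℝ, 0 < t →
      μ {ω | t ≤ |φ (x ω) - ∫ ω2, φ (x ω2) ∂μ|} ≤
        ENNReal.ofReal (2 * Real.exp (-t ^ 2 / K ^ 2))

section VecNormHelpers

variable {p : ℕ}

lemma vecNorm_eq_norm (x : Fin p → ℝ) :
    vecNorm x = ‖(WithLp.equiv 2 (Fin p → ℝ)).symm x‖ := by
  rw [show ((WithLp.equiv 2 (Fin p → ℝ)).symm x) = (WithLp.toLp 2 x : EuclideanSpace ℝ (Fin p)) from rfl]
  rw [EuclideanSpace.norm_eq]
  unfold vecNorm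
  congr 1
  exact Finset.sum_congr rfl fun i _ => by rw [Real.norm_eq_abs, sq_abs]

lemma vecNorm_nonneg (x : Fin p → ℝ) : 0 ≤ vecNorm x := Real.sqrt_nonneg _

lemma vecNorm_add_le (x y : Fin p → ℝ) : vecNorm (x + y) ≤ vecNorm x + vecNorm y := by
  simp only [vecNorm_eq_norm]
  rw [show (WithLp.equiv 2 (Fin p → ℝ)).symm (x + y)
    = (WithLp.equiv 2 (Fin p → ℝ)).symm x + (WithLp.equiv 2 (Fin p → ℝ)).symm y from rfl]
  exact norm_add_le _ _

lemma vecNorm_smul (c : ℝ) (x : Fin p → ℝ) : vecNorm (c • x) = |c| * vecNorm x := by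
  simp only [vecNorm_eq_norm]
  rw [show (WithLp.equiv 2 (Fin p → ℝ)).symm (c • x)
    = c • (WithLp.equiv 2 (Fin p → ℝ)).symm x from rfl]
  rw [norm_smul, Real.norm_eq_abs]

lemma convexOn_vecNorm : ConvexOn ℝ Set.univ (vecNorm : (Fin p → ℝ) → ℝ) := by
  constructor
  · exact convex_univ
  · intro x _ y _ a b ha hb hab
    calc vecNorm (a • x + b • y) ≤ vecNorm (a • x) + vecNorm (b • y) := vecNorm_add_le _ _
    _ = a * vecNorm x + b * vecNorm y := by
        rw [vecNorm_smul, vecNorm_smul, abs_of_nonneg ha, abs_of_nonneg hb]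
    _ = a • vecNorm x + b • vecNorm y := rfl

lemma vecNorm_lip (x y : Fin p → ℝ) : |vecNorm x - vecNorm y| ≤ 1 * vecNorm (x - y) := by
  rw [one_mul]
  simp only [vecNorm_eq_norm]
  rw [show (WithLp.equiv 2 (Fin p → ℝ)).symm (x - y)
    = (WithLp.equiv 2 (Fin p → ℝ)).symm x - (WithLp.equiv 2 (Fin p → ℝ)).symm y from rfl]
  exact abs_norm_sub_norm_le _ _

lemma vecNorm_le_sum_abs (x : Fin p → ℝ) : vecNorm x ≤ ∑ i, |x i| := by
  unfold vecNorm
  rw [show (∑ i, (x i)^2 : ℝ) = ∑ i, |x i|^2 by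
    exact Finset.sum_congr rfl fun i _ => (sq_abs _).symm]
  calc Real.sqrt (∑ i, |x i|^2) ≤ Real.sqrt ((∑ i, |x i|)^2) := by
        apply Real.sqrt_le_sqrt
        exact Finset.sum_sq_le_sq_sum_of_nonneg fun i _ => abs_nonneg _
  _ = ∑ i, |x i| := Real.sqrt_sq (Finset.sum_nonneg fun i _ => abs_nonneg _)

lemma continuous_of_lip {L : ℝ} {φ : (Fin p → ℝ) → ℝ}
    (h : ∀ y z, |φ y - φ z| ≤ L * vecNorm (y - z)) : Continuous φ := by
  rcases le_or_gt L 0 with hL | hL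
  · have : ∀ y z, φ y = φ z := by
      intro y z
      have h1 := h y z
      have h2 : L * vecNorm (y - z) ≤ 0 :=
        mul_nonpos_of_nonpos_of_nonneg hL (vecNorm_nonneg _)
      have := abs_nonneg (φ y - φ z)
      have : |φ y - φ z| = 0 := le_antisymm (h1.trans h2) this
      linarith [abs_eq_zero.mp this, sub_eq_zero.mp (abs_eq_zero.mp this)]
    exact continuous_const.congr fun y => this 0 y
  · have key : ∀ y z : Fin p → ℝ, dist (φ y) (φ z) ≤ (L * p) * dist y z := by
      intro y z
      rw [Real.dist_eq]
      refine (h y z).trans ?_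
      have h1 : vecNorm (y - z) ≤ ∑ i, |y i - z i| := vecNorm_le_sum_abs _
      have h2 : (∑ i : Fin p, |y i - z i|) ≤ (p : ℝ) * dist y z := by
        calc (∑ i : Fin p, |y i - z i|) ≤ ∑ _i : Fin p, dist y z := by
              apply Finset.sum_le_sum
              intro i _
              rw [← Real.dist_eq]
              exact dist_le_pi_dist y z i
        _ = (p : ℝ) * dist y z := by simp [Finset.sum_const, mul_comm]
      calc L * vecNorm (y - z) ≤ L * ((p:ℝ) * dist y z) :=
            mul_le_mul_of_nonneg_left (h1.trans h2) hL.le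
      _ = (L * p) * dist y z := by ring
    have : LipschitzWith (L * p).toNNReal φ := by
      apply LipschitzWith.of_dist_le_mul
      intro y z
      refine (key y z).trans ?_
      have : ((L * (p:ℝ)).toNNReal : ℝ) = max (L * p) 0 := rfl
      rw [this]
      exact mul_le_mul_of_nonneg_right (le_max_left _ _) dist_nonneg
    exact this.continuous

end VecNormHelpers

noncomputable def c0 : ℝ := 360

lemma c0_pos : (0:ℝ) < c0 := by norm_num [c0]

lemma exp_quad_bound (x : ℝ) : exp x ≤ 1 + x + x^2 * exp |x| := by
  rcases le_or_gt 0 x with hx | hx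
  · rw [abs_of_nonneg hx]
    have h1 : (1 - x) * exp x ≤ 1 := by
      have h := Real.add_one_le_exp (-x)
      have h2 : Real.exp (-x) * Real.exp x = 1 := by
        rw [← Real.exp_add]; simp
      nlinarith [Real.exp_pos x, mul_le_mul_of_nonneg_right h (Real.exp_nonneg x)]
    nlinarith [Real.exp_pos x, mul_nonneg hx (Real.exp_nonneg x), sq_nonneg x]
  · have h1 : (1 - x) * exp x ≤ 1 := by
      have h := Real.add_one_le_exp (-x)
      have h2 : Real.exp (-x) * Real.exp x = 1 := by
        rw [← Real.exp_add]; simp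
      nlinarith [Real.exp_pos x, mul_le_mul_of_nonneg_right h (Real.exp_nonneg x)]
    have h2 : exp x ≤ 1 + x + x^2 := by
      nlinarith [Real.exp_pos x, sq_nonneg x, mul_pos (Real.exp_pos x) (Real.exp_pos x)]
    have h3 : (1:ℝ) ≤ exp |x| := by
      rw [← Real.exp_zero]; exact Real.exp_le_exp.mpr (abs_nonneg x)
    nlinarith [sq_nonneg x]

lemma sq_le_four_exp {u : ℝ} (hu : 0 ≤ u) : u^2 ≤ 4 * exp u := by
  have h := Real.add_one_le_exp (u/2)
  have h2 : Real.exp (u/2) * Real.exp (u/2) = Real.exp u := by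
    rw [← Real.exp_add]; ring_nf
  nlinarith [Real.exp_pos (u/2)]

lemma exp_two_lt : exp 2 < 7.39 := by
  have h : Real.exp 2 = Real.exp 1 * Real.exp 1 := by rw [← Real.exp_add]; norm_num
  nlinarith [Real.exp_one_lt_d9, Real.exp_pos 1]

/-- Tail bound implies exponential-moment control: the key one-dimensional lemma. -/
lemma mgf_of_tail {Ω : Type} [MeasurableSpace Ω] (μ : Measure Ω) [IsProbabilityMeasure μ]
    (Z : Ω → ℝ) (hZ : AEMeasurable Z μ) (hint : Integrable Z μ)
    (hmean : ∫ ω, Z ω ∂μ = 0) {K : ℝ} (hK : 0 < K)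
    (htail : ∀ t : ℝ, 0 < t → μ {ω | t ≤ |Z ω|} ≤ ENNReal.ofReal (2 * exp (-t^2 / K^2))) :
    ∀ l : ℝ, Integrable (fun ω => exp (l * Z ω)) μ ∧
      ∫ ω, exp (l * Z ω) ∂μ ≤ exp (c0 * l^2 * K^2) := by
  -- Step A : for s > 0, `exp (s|Z|)` is integrable with explicit bound
  have stepA : ∀ s : ℝ, 0 < s → Integrable (fun ω => exp (s * |Z ω|)) μ ∧
      ∫ ω, exp (s * |Z ω|) ∂μ ≤ 1 + 6 * s * K * exp (s^2 * K^2 / 2) := by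
    intro s hs
    have hmexp : AEMeasurable (fun ω => exp (s * |Z ω|)) μ := Real.measurable_exp.comp_aemeasurable ((measurable_abs.comp_aemeasurable hZ).const_mul s)
    have hG : ∀ u : ℝ, (∫ t in (0)..u, s * exp (s * t)) = exp (s * u) - 1 := by
      intro u
      have hd : ∀ t ∈ Set.uIcc (0:ℝ) u, HasDerivAt (fun t => exp (s * t)) (s * exp (s * t)) t := by
        intro t _
        have := ((hasDerivAt_id t).const_mul s).exp
        simpa [mul_comm] using this
      have hi : IntervalIntegrable (fun t => s * exp (s * t)) volume 0 u :=
        (continuous_const.mul ((continuous_const.mul continuous_id).rexp)).intervalIntegrable 0 u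
      rw [intervalIntegral.integral_eq_sub_of_hasDerivAt hd hi]
      simp
    have layer : ∫⁻ ω, ENNReal.ofReal (exp (s * |Z ω|) - 1) ∂μ
        = ∫⁻ t in Set.Ioi (0:ℝ), μ {ω | t ≤ |Z ω|} * ENNReal.ofReal (s * exp (s * t)) := by
      have := lintegral_comp_eq_lintegral_meas_le_mul μ (f := fun ω => |Z ω|)
        (g := fun t => s * exp (s * t))
        (Filter.Eventually.of_forall fun ω => abs_nonneg _) (measurable_abs.comp_aemeasurable hZ)
        (fun t _ => (continuous_const.mul
          ((continuous_const.mul continuous_id).rexp)).intervalIntegrable 0 t)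
        (Filter.Eventually.of_forall fun t => by positivity)
      simp only [hG] at this
      exact this
    have tailbound : (∫⁻ t in Set.Ioi (0:ℝ), μ {ω | t ≤ |Z ω|} * ENNReal.ofReal (s * exp (s * t)))
        ≤ ENNReal.ofReal (6 * s * K * exp (s^2 * K^2 / 2)) := by
      have hb : (0:ℝ) < 1 / (2 * K^2) := by positivity
      have step1 : (∫⁻ t in Set.Ioi (0:ℝ), μ {ω | t ≤ |Z ω|} * ENNReal.ofReal (s * exp (s * t)))
          ≤ ∫⁻ t in Set.Ioi (0:ℝ),
              ENNReal.ofReal ((2 * s * exp (s^2 * K^2 / 2)) * exp (-(1/(2*K^2)) * t^2)) := by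
        apply setLIntegral_mono
        · exact ENNReal.measurable_ofReal.comp
            (((continuous_const.mul ((continuous_const.mul (continuous_pow 2)).rexp))).measurable)
        · intro t ht
          calc μ {ω | t ≤ |Z ω|} * ENNReal.ofReal (s * exp (s * t))
              ≤ ENNReal.ofReal (2 * exp (-t^2 / K^2)) * ENNReal.ofReal (s * exp (s * t)) :=
                mul_le_mul_left (htail t ht) _
          _ = ENNReal.ofReal ((2 * exp (-t^2 / K^2)) * (s * exp (s * t))) := by
                rw [← ENNReal.ofReal_mul (by positivity)]
          _ ≤ ENNReal.ofReal ((2 * s * exp (s^2 * K^2 / 2)) * exp (-(1/(2*K^2)) * t^2)) := by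
                apply ENNReal.ofReal_le_ofReal
                have hKne : K ≠ 0 := hK.ne'
                have h2 : t^2/K^2 = (t/K)^2 := by field_simp
                have h3 : (1/(2*K^2)) * t^2 = (t/K)^2/2 := by rw [div_pow]; ring
                have h4 : s * t = s * (t/K) * K := by field_simp
                have e2 : s * t + -t^2/K^2 ≤ s^2 * K^2 / 2 + -(1/(2*K^2)) * t^2 := by
                  have h5 : -t^2/K^2 = -((t/K)^2) := by rw [neg_div, h2]
                  rw [h5, h4, show -(1/(2*K^2)) * t^2 = -((1/(2*K^2)) * t^2) by ring, h3]
                  nlinarith [sq_nonneg (s*K - t/K)]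
                calc (2 * exp (-t^2 / K^2)) * (s * exp (s * t))
                    = 2 * s * exp (s * t + -t^2/K^2) := by rw [Real.exp_add]; ring
                _ ≤ 2 * s * exp (s^2 * K^2 / 2 + -(1/(2*K^2)) * t^2) := by
                      have := Real.exp_le_exp.mpr e2
                      nlinarith [Real.exp_pos (s * t + -t^2/K^2)]
                _ = (2 * s * exp (s^2 * K^2 / 2)) * exp (-(1/(2*K^2)) * t^2) := by
                      rw [Real.exp_add]; ring
      have step2 : (∫⁻ t in Set.Ioi (0:ℝ),
            ENNReal.ofReal ((2 * s * exp (s^2 * K^2 / 2)) * exp (-(1/(2*K^2)) * t^2)))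
          ≤ ENNReal.ofReal (2 * s * exp (s^2 * K^2 / 2)) * ENNReal.ofReal (3 * K) := by
        have e3 : ∀ t : ℝ, ENNReal.ofReal ((2 * s * exp (s^2 * K^2 / 2)) * exp (-(1/(2*K^2)) * t^2))
            = ENNReal.ofReal (2 * s * exp (s^2 * K^2 / 2))
              * ENNReal.ofReal (exp (-(1/(2*K^2)) * t^2)) := fun t => by
          rw [ENNReal.ofReal_mul (by positivity)]
        simp only [e3]
        rw [lintegral_const_mul' _ _ ENNReal.ofReal_ne_top]
        apply mul_le_mul_right
        have hgauss : (∫⁻ t : ℝ, ENNReal.ofReal (exp (-(1/(2*K^2)) * t^2)))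
            = ENNReal.ofReal (Real.sqrt (π / (1/(2*K^2)))) := by
          rw [← ofReal_integral_eq_lintegral_ofReal (integrable_exp_neg_mul_sq hb)
            (Filter.Eventually.of_forall fun t => (Real.exp_pos _).le)]
          rw [integral_gaussian]
        calc (∫⁻ t in Set.Ioi (0:ℝ), ENNReal.ofReal (exp (-(1/(2*K^2)) * t^2)))
            ≤ ∫⁻ t : ℝ, ENNReal.ofReal (exp (-(1/(2*K^2)) * t^2)) :=
              setLIntegral_le_lintegral _ _
        _ = ENNReal.ofReal (Real.sqrt (π / (1/(2*K^2)))) := hgauss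
        _ ≤ ENNReal.ofReal (3 * K) := by
              apply ENNReal.ofReal_le_ofReal
              have h1 : π / (1 / (2 * K^2)) = 2 * π * K^2 := by field_simp
              rw [h1]
              calc Real.sqrt (2 * π * K^2) ≤ Real.sqrt ((3*K)^2) := by
                    apply Real.sqrt_le_sqrt; nlinarith [Real.pi_le_four, sq_nonneg K]
              _ = 3 * K := Real.sqrt_sq (by positivity)
      calc (∫⁻ t in Set.Ioi (0:ℝ), μ {ω | t ≤ |Z ω|} * ENNReal.ofReal (s * exp (s * t)))
          ≤ ENNReal.ofReal (2 * s * exp (s^2 * K^2 / 2)) * ENNReal.ofReal (3 * K) :=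
            step1.trans step2
      _ = ENNReal.ofReal (6 * s * K * exp (s^2 * K^2 / 2)) := by
            rw [← ENNReal.ofReal_mul (by positivity)]
            congr 1
            ring
    have hfin : ∫⁻ ω, ENNReal.ofReal (exp (s * |Z ω|)) ∂μ
        ≤ ENNReal.ofReal (6 * s * K * exp (s^2 * K^2 / 2)) + 1 := by
      have hpt : ∀ ω, ENNReal.ofReal (exp (s * |Z ω|))
          ≤ ENNReal.ofReal (exp (s * |Z ω|) - 1) + ENNReal.ofReal 1 := by
        intro ω
        calc ENNReal.ofReal (exp (s * |Z ω|))
            = ENNReal.ofReal ((exp (s * |Z ω|) - 1) + 1) := by norm_num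
        _ ≤ _ := ENNReal.ofReal_add_le
      calc ∫⁻ ω, ENNReal.ofReal (exp (s * |Z ω|)) ∂μ
          ≤ ∫⁻ ω, (ENNReal.ofReal (exp (s * |Z ω|) - 1) + ENNReal.ofReal 1) ∂μ :=
            lintegral_mono hpt
      _ = (∫⁻ ω, ENNReal.ofReal (exp (s * |Z ω|) - 1) ∂μ) + ENNReal.ofReal 1 := by
            rw [lintegral_add_right' _ aemeasurable_const, lintegral_const]
            simp
      _ ≤ ENNReal.ofReal (6 * s * K * exp (s^2 * K^2 / 2)) + 1 := by
            rw [layer]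
            exact add_le_add tailbound (by simp)
    have hIntegrable : Integrable (fun ω => exp (s * |Z ω|)) μ := by
      refine ⟨hmexp.aestronglyMeasurable, ?_⟩
      rw [hasFiniteIntegral_iff_ofReal (Filter.Eventually.of_forall fun ω => (exp_pos _).le)]
      exact lt_of_le_of_lt hfin (by finiteness)
    refine ⟨hIntegrable, ?_⟩
    have h1 : Integrable (fun ω => exp (s * |Z ω|) - 1) μ := hIntegrable.sub (integrable_const 1)
    have h2 : ∫ ω, (exp (s * |Z ω|) - 1) ∂μ ≤ 6 * s * K * exp (s^2 * K^2 / 2) := by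
      rw [← ENNReal.ofReal_le_ofReal_iff (by positivity)]
      rw [ofReal_integral_eq_lintegral_ofReal h1
        (Filter.Eventually.of_forall fun ω => by
          simp only [Pi.zero_apply, sub_nonneg, Real.one_le_exp_iff]
          positivity)]
      rw [layer]
      exact tailbound
    have h3 : ∫ ω, (exp (s * |Z ω|) - 1) ∂μ = (∫ ω, exp (s * |Z ω|) ∂μ) - 1 := by
      rw [integral_sub hIntegrable (integrable_const 1), integral_const]
      simp
    linarith [h2, h3.symm.trans_le h2]
  -- Step B/C : the actual MGF bound
  intro l
  rcases eq_or_ne l 0 with rfl | hl0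
  · constructor
    · simpa using (integrable_const (1:ℝ))
    · have : ∀ ω : Ω, exp ((0:ℝ) * Z ω) = 1 := fun ω => by simp
      rw [integral_congr_ae (Filter.Eventually.of_forall this)]
      simp only [integral_const, measure_univ, ENNReal.toReal_one, probReal_univ, smul_eq_mul, one_mul]
      rw [show c0 * (0:ℝ)^2 * K^2 = 0 by ring, Real.exp_zero]
  · have hs : 0 < |l| := abs_pos.mpr hl0
    obtain ⟨hA1, hA2⟩ := stepA |l| hs
    have hptabs : ∀ ω, exp (l * Z ω) ≤ exp (|l| * |Z ω|) := fun ω =>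
      Real.exp_le_exp.mpr (le_trans (le_abs_self _) (by rw [abs_mul]))
    have hint_exp : Integrable (fun ω => exp (l * Z ω)) μ := by
      apply Integrable.mono' hA1
        (((Real.measurable_exp.comp_aemeasurable (hZ.const_mul l)).aestronglyMeasurable :
          AEStronglyMeasurable (fun ω => exp (l * Z ω)) μ))
      exact Filter.Eventually.of_forall fun ω => by
        simp only [Function.comp_apply, Real.norm_eq_abs, abs_of_pos (Real.exp_pos _)]
        exact hptabs ω
    refine ⟨hint_exp, ?_⟩
    rcases le_or_gt 1 (|l| * K) with hbig | hsmall
    · -- large l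
      have step1 : ∫ ω, exp (l * Z ω) ∂μ ≤ ∫ ω, exp (|l| * |Z ω|) ∂μ :=
        integral_mono hint_exp hA1 hptabs
      have ha : (1:ℝ) ≤ |l| * K := hbig
      have hA : (0:ℝ) ≤ |l|^2 * K^2 / 2 := by positivity
      have h1 : 1 + 6 * |l| * K * exp (|l|^2 * K^2/2)
          ≤ (1 + 6 * (|l| * K)) * exp (|l|^2 * K^2/2) := by
        nlinarith [Real.one_le_exp hA]
      have h2 : 1 + 6 * (|l| * K) ≤ exp (6 * (|l| * K)) := by
        have := Real.add_one_le_exp (6 * (|l| * K)); linarith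
      have h4 : 6 * (|l| * K) + |l|^2 * K^2/2 ≤ c0 * l^2 * K^2 := by
        have hsq : |l|^2 = l^2 := sq_abs l
        rw [show (6:ℝ) * (|l| * K) = 6 * (|l| * K) * 1 by ring]
        have h5 : 6 * (|l| * K) * 1 ≤ 6 * (|l| * K) * (|l| * K) :=
          mul_le_mul_of_nonneg_left ha (by positivity)
        have h6 : 6 * (|l| * K) * (|l| * K) = 6 * (|l|^2 * K^2) := by ring
        rw [c0] at *
        nlinarith [sq_nonneg (|l| * K)]
      calc ∫ ω, exp (l * Z ω) ∂μ ≤ 1 + 6 * |l| * K * exp (|l|^2 * K^2/2) := by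
            refine step1.trans ?_
            have : (|l|:ℝ)^2 * K^2 / 2 = |l|^2 * K^2/2 := by ring
            linarith [hA2]
      _ ≤ (1 + 6 * (|l| * K)) * exp (|l|^2 * K^2/2) := h1
      _ ≤ exp (6 * (|l| * K)) * exp (|l|^2 * K^2/2) :=
            mul_le_mul_of_nonneg_right h2 (Real.exp_nonneg _)
      _ = exp (6 * (|l| * K) + |l|^2 * K^2/2) := (Real.exp_add _ _).symm
      _ ≤ exp (c0 * l^2 * K^2) := Real.exp_le_exp.mpr h4
    · -- small l
      have h2K : (0:ℝ) < 2/K := by positivity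
      obtain ⟨hB1, hB2⟩ := stepA (2/K) h2K
      have hlK : |l| ≤ 1/K := by
        rw [le_div_iff₀ hK]; exact hsmall.le
      have pt : ∀ ω, exp (l * Z ω)
          ≤ 1 + l * Z ω + 4 * l^2 * K^2 * exp ((2/K) * |Z ω|) := by
        intro ω
        have h0 := exp_quad_bound (l * Z ω)
        have habs : |l * Z ω| = |l| * |Z ω| := abs_mul _ _
        have hu : (0:ℝ) ≤ |Z ω| / K := by positivity
        have h4u := sq_le_four_exp hu
        have hz2 : (Z ω)^2 = K^2 * (|Z ω|/K)^2 := by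
          rw [div_pow, sq_abs]; field_simp
        have hexp1 : exp (|l| * |Z ω|) ≤ exp (|Z ω| / K) := by
          apply Real.exp_le_exp.mpr
          calc |l| * |Z ω| ≤ (1/K) * |Z ω| :=
                mul_le_mul_of_nonneg_right hlK (abs_nonneg _)
          _ = |Z ω| / K := by ring
        have key : (l * Z ω)^2 * exp |l * Z ω| ≤ 4 * l^2 * K^2 * exp ((2/K) * |Z ω|) := by
          rw [habs, mul_pow]
          calc l^2 * (Z ω)^2 * exp (|l| * |Z ω|)
              ≤ l^2 * (Z ω)^2 * exp (|Z ω| / K) := by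
                apply mul_le_mul_of_nonneg_left hexp1 (by positivity)
          _ = l^2 * (K^2 * (|Z ω|/K)^2) * exp (|Z ω| / K) := by rw [← hz2]
          _ ≤ l^2 * (K^2 * (4 * exp (|Z ω|/K))) * exp (|Z ω| / K) := by
                apply mul_le_mul_of_nonneg_right _ (Real.exp_nonneg _)
                apply mul_le_mul_of_nonneg_left _ (sq_nonneg l)
                exact mul_le_mul_of_nonneg_left h4u (sq_nonneg K)
          _ = 4 * l^2 * K^2 * (exp (|Z ω|/K) * exp (|Z ω|/K)) := by ring
          _ = 4 * l^2 * K^2 * exp ((2/K) * |Z ω|) := by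
                rw [← Real.exp_add]
                congr 1
                ring
        linarith
      have int1 : Integrable (fun ω => 1 + l * Z ω) μ :=
        (integrable_const 1).add (hint.const_mul l)
      have int2 : Integrable (fun ω => 4 * l^2 * K^2 * exp ((2/K) * |Z ω|)) μ :=
        hB1.const_mul _
      have step1 : ∫ ω, exp (l * Z ω) ∂μ
          ≤ ∫ ω, (1 + l * Z ω + 4 * l^2 * K^2 * exp ((2/K) * |Z ω|)) ∂μ := by
        apply integral_mono hint_exp _ pt
        exact int1.add int2
      have hsplit : ∫ ω, (1 + l * Z ω + 4 * l^2 * K^2 * exp ((2/K) * |Z ω|)) ∂μ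
          = 1 + l * (∫ ω, Z ω ∂μ) + 4 * l^2 * K^2 * ∫ ω, exp ((2/K) * |Z ω|) ∂μ := by
        rw [integral_add int1 int2, integral_add (integrable_const 1) (hint.const_mul l),
          integral_const, integral_const_mul, integral_const_mul]
        simp [measure_univ]
      have hexp2 : ∫ ω, exp ((2/K) * |Z ω|) ∂μ ≤ 1 + 12 * exp 2 := by
        refine hB2.trans ?_
        have e1 : (2/K)^2 * K^2 / 2 = 2 := by field_simp
        have e2 : 6 * (2/K) * K = 12 := by field_simp; norm_num
        rw [e1, e2]
      have final : 1 + 4 * l^2 * K^2 * (1 + 12 * exp 2) ≤ exp (c0 * l^2 * K^2) := by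
        have h12 : 4 * (1 + 12 * exp 2) ≤ c0 := by
          rw [c0]; nlinarith [exp_two_lt]
        have h13 : 4 * l^2 * K^2 * (1 + 12 * exp 2) ≤ c0 * l^2 * K^2 := by
          have hnn : (0:ℝ) ≤ l^2 * K^2 := by positivity
          calc 4 * l^2 * K^2 * (1 + 12 * exp 2) = (4 * (1 + 12 * exp 2)) * (l^2 * K^2) := by ring
          _ ≤ c0 * (l^2 * K^2) := mul_le_mul_of_nonneg_right h12 hnn
          _ = c0 * l^2 * K^2 := by ring
        have := Real.add_one_le_exp (c0 * l^2 * K^2)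
        linarith
      calc ∫ ω, exp (l * Z ω) ∂μ
          ≤ 1 + l * (∫ ω, Z ω ∂μ) + 4 * l^2 * K^2 * ∫ ω, exp ((2/K) * |Z ω|) ∂μ :=
            step1.trans_eq hsplit
      _ = 1 + 4 * l^2 * K^2 * ∫ ω, exp ((2/K) * |Z ω|) ∂μ := by rw [hmean]; ring
      _ ≤ 1 + 4 * l^2 * K^2 * (1 + 12 * exp 2) := by
            have hnn : (0:ℝ) ≤ 4 * l^2 * K^2 := by positivity
            nlinarith [hexp2]
      _ ≤ exp (c0 * l^2 * K^2) := final

section MpSec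
variable {p : ℕ}

/-- MGF-control property for a measure on `Fin p → ℝ`, quantified over all convex
Lipschitz functions. -/
def Mp (κ : Measure (Fin p → ℝ)) (v : ℝ) : Prop :=
  ∀ φ : (Fin p → ℝ) → ℝ, ConvexOn ℝ Set.univ φ → ∀ L : ℝ, 0 ≤ L →
    (∀ y z, |φ y - φ z| ≤ L * vecNorm (y - z)) →
    Integrable φ κ ∧ ∀ l : ℝ, Integrable (fun y => exp (l * φ y)) κ ∧
      ∫ y, exp (l * φ y) ∂κ ≤ exp (l * ∫ y, φ y ∂κ + c0 * l^2 * L^2 * v)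

lemma convexOn_comp_add {φ : (Fin p → ℝ) → ℝ} (h : ConvexOn ℝ Set.univ φ)
    (y : Fin p → ℝ) : ConvexOn ℝ Set.univ (fun x => φ (x + y)) := by
  refine ⟨convex_univ, fun x1 _ x2 _ a b ha hb hab => ?_⟩
  have e : a • x1 + b • x2 + y = a • (x1 + y) + b • (x2 + y) := by
    rw [smul_add, smul_add]
    rw [show a • x1 + b • x2 + y = a • x1 + b • x2 + (a + b) • y by rw [hab, one_smul]]
    rw [add_smul]
    abel
  show φ (a • x1 + b • x2 + y) ≤ a • φ (x1 + y) + b • φ (x2 + y)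
  rw [e]
  exact h.2 (Set.mem_univ _) (Set.mem_univ _) ha hb hab

lemma convexOn_comp_smul {φ : (Fin p → ℝ) → ℝ} (h : ConvexOn ℝ Set.univ φ)
    (c : ℝ) : ConvexOn ℝ Set.univ (fun x => φ (c • x)) := by
  refine ⟨convex_univ, fun x1 _ x2 _ a b ha hb hab => ?_⟩
  have e : c • (a • x1 + b • x2) = a • (c • x1) + b • (c • x2) := by
    rw [smul_add, smul_comm c a, smul_comm c b]
  show φ (c • (a • x1 + b • x2)) ≤ a • φ (c • x1) + b • φ (c • x2)
  rw [e]
  exact h.2 (Set.mem_univ _) (Set.mem_univ _) ha hb hab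

/-- CCP yields the MGF-control property for the law. -/
lemma ccp_to_Mp {Ω : Type} [MeasurableSpace Ω] (μ : Measure Ω) [IsProbabilityMeasure μ]
    (x : Ω → Fin p → ℝ) (hx : Measurable x) {K : ℝ} (hK : 0 < K) (h : CCP μ x K) :
    Mp (μ.map x) (K^2) := by
  intro φ hconv L hL hLip
  have hφc : Continuous φ := continuous_of_lip hLip
  haveI : IsProbabilityMeasure (μ.map x) := Measure.isProbabilityMeasure_map hx.aemeasurable
  have hmap : ∀ ψ : (Fin p → ℝ) → ℝ, Continuous ψ →
      (∫ y, ψ y ∂(μ.map x)) = ∫ ω, ψ (x ω) ∂μ := fun ψ hψ =>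
    integral_map hx.aemeasurable hψ.aestronglyMeasurable
  have hmapInt : ∀ ψ : (Fin p → ℝ) → ℝ, Continuous ψ →
      (Integrable ψ (μ.map x) ↔ Integrable (fun ω => ψ (x ω)) μ) := fun ψ hψ =>
    integrable_map_measure hψ.aestronglyMeasurable hx.aemeasurable
  rcases eq_or_lt_of_le hL with hL0 | hLpos
  · -- L = 0 : φ is constant
    have hc : ∀ y, φ y = φ 0 := by
      intro y
      have h1 := hLip y 0
      rw [← hL0, zero_mul] at h1
      have h2 := abs_nonneg (φ y - φ 0)
      have : φ y - φ 0 = 0 := abs_eq_zero.mp (le_antisymm h1 h2)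
      linarith
    have hfun : φ = fun _ => φ 0 := funext hc
    constructor
    · rw [hfun]; exact integrable_const _
    · intro l
      rw [hfun]
      constructor
      · exact integrable_const _
      · rw [integral_const, integral_const]
        simp only [measure_univ, ENNReal.toReal_one, probReal_univ, one_smul, smul_eq_mul, one_mul]
        rw [← hL0]
        rw [show c0 * l ^ 2 * (0:ℝ) ^ 2 * K ^ 2 = 0 by ring, add_zero]
  · -- L > 0
    set φ1 : (Fin p → ℝ) → ℝ := fun y => L⁻¹ * φ y with hφ1def
    have hconv1 : ConvexOn ℝ Set.univ φ1 := by
      have := hconv.smul (le_of_lt (inv_pos.mpr hLpos))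
      simpa [hφ1def, smul_eq_mul] using this
    have hLip1 : ∀ y z, |φ1 y - φ1 z| ≤ vecNorm (y - z) := by
      intro y z
      have : φ1 y - φ1 z = L⁻¹ * (φ y - φ z) := by rw [hφ1def]; ring
      rw [this, abs_mul, abs_of_pos (inv_pos.mpr hLpos)]
      calc L⁻¹ * |φ y - φ z| ≤ L⁻¹ * (L * vecNorm (y - z)) :=
            mul_le_mul_of_nonneg_left (hLip y z) (le_of_lt (inv_pos.mpr hLpos))
      _ = vecNorm (y - z) := by field_simp
    obtain ⟨hI1, htail1⟩ := h φ1 hconv1 hLip1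
    have hIφ : Integrable (fun ω => φ (x ω)) μ := by
      have := hI1.const_mul L
      refine this.congr (Filter.Eventually.of_forall fun ω => ?_)
      rw [hφ1def]
      field_simp
    set m : ℝ := ∫ ω, φ (x ω) ∂μ with hm
    set Z : Ω → ℝ := fun ω => φ (x ω) - m with hZdef
    have hZmeas : AEMeasurable Z μ :=
      ((hφc.measurable.comp hx).sub measurable_const).aemeasurable
    have hZint : Integrable Z μ := hIφ.sub (integrable_const m)
    have hZmean : ∫ ω, Z ω ∂μ = 0 := by
      rw [hZdef]
      rw [integral_sub hIφ (integrable_const m), integral_const]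
      simp [measure_univ, hm]
    have hm1 : (∫ ω, φ1 (x ω) ∂μ) = L⁻¹ * m := by
      rw [hφ1def, hm, integral_const_mul]
    have htailZ : ∀ t : ℝ, 0 < t →
        μ {ω | t ≤ |Z ω|} ≤ ENNReal.ofReal (2 * exp (-t^2 / (L*K)^2)) := by
      intro t ht
      have hset : {ω | t ≤ |Z ω|} = {ω | t/L ≤ |φ1 (x ω) - ∫ ω2, φ1 (x ω2) ∂μ|} := by
        ext ω
        simp only [Set.mem_setOf_eq, hm1, hφ1def, hZdef, integral_const_mul, ← hm]
        have e : L⁻¹ * φ (x ω) - L⁻¹ * m = L⁻¹ * (φ (x ω) - m) := by ring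
        rw [e, abs_mul, abs_of_pos (inv_pos.mpr hLpos)]
        rw [div_le_iff₀ hLpos] -- t/L ≤ L⁻¹|..| ↔ t ≤ L⁻¹|..|*L
        constructor
        · intro h'
          calc t ≤ |φ (x ω) - m| := h'
          _ = L⁻¹ * |φ (x ω) - m| * L := by field_simp
        · intro h'
          calc t ≤ L⁻¹ * |φ (x ω) - m| * L := h'
          _ = |φ (x ω) - m| := by field_simp
      rw [hset]
      refine (htail1 (t/L) (by positivity)).trans ?_
      apply ENNReal.ofReal_le_ofReal
      have e : -(t/L)^2 / K^2 = -t^2 / (L*K)^2 := by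
        rw [div_pow, mul_pow]
        field_simp
      rw [e]
    have hmgf := mgf_of_tail μ Z hZmeas hZint hZmean (mul_pos hLpos hK) htailZ
    constructor
    · exact (hmapInt φ hφc).mpr hIφ
    · intro l
      obtain ⟨hImgf, hBmgf⟩ := hmgf l
      have hIexp : Integrable (fun ω => exp (l * φ (x ω))) μ := by
        have := hImgf.const_mul (exp (l * m))
        refine this.congr (Filter.Eventually.of_forall fun ω => ?_)
        show exp (l * m) * exp (l * Z ω) = exp (l * φ (x ω))
        rw [← Real.exp_add, hZdef]
        congr 1
        ring
      constructor
      · exact (hmapInt _ (by continuity)).mpr hIexp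
      · rw [hmap _ (by continuity), hmap _ hφc, ← hm]
        have e1 : ∀ ω, exp (l * φ (x ω)) = exp (l * m) * exp (l * Z ω) := by
          intro ω
          rw [hZdef, ← Real.exp_add]
          congr 1
          ring
        rw [integral_congr_ae (Filter.Eventually.of_forall e1), integral_const_mul]
        calc exp (l * m) * ∫ ω, exp (l * Z ω) ∂μ
            ≤ exp (l * m) * exp (c0 * l^2 * (L*K)^2) :=
              mul_le_mul_of_nonneg_left hBmgf (Real.exp_nonneg _)
        _ = exp (l * m + c0 * l^2 * L^2 * K^2) := by
              rw [← Real.exp_add]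
              congr 1
              ring
end MpSec

section MpSec2
variable {p : ℕ}

lemma Mp_map_smul {κ : Measure (Fin p → ℝ)} {v : ℝ} (h : Mp κ v) (c : ℝ) :
    Mp (κ.map (fun y => c • y)) (c^2 * v) := by
  intro φ hconv L hL hLip
  have hφc : Continuous φ := continuous_of_lip hLip
  have hsm : Measurable (fun y : Fin p → ℝ => c • y) := measurable_const_smul c
  have hLip' : ∀ y z, |φ (c • y) - φ (c • z)| ≤ (L * |c|) * vecNorm (y - z) := by
    intro y z
    calc |φ (c • y) - φ (c • z)| ≤ L * vecNorm (c • y - c • z) := hLip _ _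
    _ = L * vecNorm (c • (y - z)) := by rw [smul_sub]
    _ = (L * |c|) * vecNorm (y - z) := by rw [vecNorm_smul]; ring
  obtain ⟨hI, hrest⟩ := h (fun y => φ (c • y)) (convexOn_comp_smul hconv c)
    (L * |c|) (by positivity) hLip'
  have hmapInt : ∀ ψ : (Fin p → ℝ) → ℝ, Continuous ψ →
      (Integrable ψ (κ.map (fun y => c • y)) ↔ Integrable (fun y => ψ (c • y)) κ) := fun ψ hψ =>
    integrable_map_measure hψ.aestronglyMeasurable hsm.aemeasurable
  have hmap : ∀ ψ : (Fin p → ℝ) → ℝ, Continuous ψ →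
      (∫ y, ψ y ∂(κ.map (fun y => c • y))) = ∫ y, ψ (c • y) ∂κ := fun ψ hψ =>
    integral_map hsm.aemeasurable hψ.aestronglyMeasurable
  constructor
  · exact (hmapInt φ hφc).mpr hI
  · intro l
    obtain ⟨hIl, hBl⟩ := hrest l
    constructor
    · exact (hmapInt _ (by continuity)).mpr hIl
    · rw [hmap _ (by continuity), hmap _ hφc]
      refine hBl.trans ?_
      apply Real.exp_le_exp.mpr
      have e : c0 * l^2 * (L * |c|)^2 * v = c0 * l^2 * L^2 * (c^2 * v) := by
        rw [mul_pow, sq_abs]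
        ring
      rw [e]

lemma Mp_zero {Ω : Type} [MeasurableSpace Ω] (μ : Measure Ω) [IsProbabilityMeasure μ] :
    Mp (μ.map (fun _ : Ω => (0 : Fin p → ℝ))) 0 := by
  intro φ hconv L hL hLip
  have hφc : Continuous φ := continuous_of_lip hLip
  have hmapInt : ∀ ψ : (Fin p → ℝ) → ℝ, Continuous ψ →
      (Integrable ψ (μ.map (fun _ : Ω => (0 : Fin p → ℝ)))
        ↔ Integrable (fun _ : Ω => ψ 0) μ) := fun ψ hψ =>
    integrable_map_measure hψ.aestronglyMeasurable measurable_const.aemeasurable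
  have hmap : ∀ ψ : (Fin p → ℝ) → ℝ, Continuous ψ →
      (∫ y, ψ y ∂(μ.map (fun _ : Ω => (0 : Fin p → ℝ)))) = ψ 0 := by
    intro ψ hψ
    rw [integral_map measurable_const.aemeasurable hψ.aestronglyMeasurable]
    simp [measure_univ]
  constructor
  · exact (hmapInt φ hφc).mpr (integrable_const _)
  · intro l
    constructor
    · exact (hmapInt _ (by continuity)).mpr (integrable_const _)
    · rw [hmap _ (by continuity), hmap _ hφc]
      apply Real.exp_le_exp.mpr
      nlinarith [sq_nonneg l, sq_nonneg L]

/-- Tensorization of the MGF property under independence (stated for the convolution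
of two laws). -/
lemma Mp_conv {κ₁ κ₂ : Measure (Fin p → ℝ)} [IsProbabilityMeasure κ₁] [IsProbabilityMeasure κ₂]
    {v₁ v₂ : ℝ} (h₁ : Mp κ₁ v₁) (h₂ : Mp κ₂ v₂) :
    Mp ((κ₁.prod κ₂).map (fun q => q.1 + q.2)) (v₁ + v₂) := by
  intro φ hconv L hL hLip
  have hφc : Continuous φ := continuous_of_lip hLip
  have hadd : Measurable (fun q : (Fin p → ℝ) × (Fin p → ℝ) => q.1 + q.2) :=
    measurable_fst.add measurable_snd
  -- integrability of φ(x+y) on the product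
  have hNint1 : Integrable vecNorm κ₁ := (h₁ vecNorm convexOn_vecNorm 1 zero_le_one vecNorm_lip).1
  have hNint2 : Integrable vecNorm κ₂ := (h₂ vecNorm convexOn_vecNorm 1 zero_le_one vecNorm_lip).1
  have hNc : Continuous (vecNorm : (Fin p → ℝ) → ℝ) := continuous_of_lip vecNorm_lip
  have hfst : Integrable (fun q : (Fin p → ℝ) × (Fin p → ℝ) => vecNorm q.1) (κ₁.prod κ₂) := by
    have hmap : (κ₁.prod κ₂).map Prod.fst = κ₁ := by
      rw [Measure.map_fst_prod]
      simp [measure_univ]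
    have := (integrable_map_measure hNc.aestronglyMeasurable measurable_fst.aemeasurable).mp
      (by rw [hmap]; exact hNint1)
    exact this
  have hsnd : Integrable (fun q : (Fin p → ℝ) × (Fin p → ℝ) => vecNorm q.2) (κ₁.prod κ₂) := by
    have hmap : (κ₁.prod κ₂).map Prod.snd = κ₂ := by
      rw [Measure.map_snd_prod]
      simp [measure_univ]
    have := (integrable_map_measure hNc.aestronglyMeasurable measurable_snd.aemeasurable).mp
      (by rw [hmap]; exact hNint2)
    exact this
  have hφbound : ∀ w : Fin p → ℝ, |φ w| ≤ |φ 0| + L * vecNorm w := by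
    intro w
    have := hLip w 0
    rw [sub_zero] at this
    calc |φ w| = |φ 0 + (φ w - φ 0)| := by ring_nf
    _ ≤ |φ 0| + |φ w - φ 0| := abs_add_le _ _
    _ ≤ |φ 0| + L * vecNorm w := by linarith
  have hprodInt : Integrable (fun q : (Fin p → ℝ) × (Fin p → ℝ) => φ (q.1 + q.2))
      (κ₁.prod κ₂) := by
    refine Integrable.mono' (g := fun q => |φ 0| + (L * vecNorm q.1 + L * vecNorm q.2))
      (((integrable_const _).add ((hfst.const_mul L).add (hsnd.const_mul L))))
      ((hφc.comp (continuous_fst.add continuous_snd)).aestronglyMeasurable)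
      (Filter.Eventually.of_forall fun q => ?_)
    rw [Real.norm_eq_abs]
    calc |φ (q.1 + q.2)| ≤ |φ 0| + L * vecNorm (q.1 + q.2) := hφbound _
    _ ≤ |φ 0| + L * (vecNorm q.1 + vecNorm q.2) := by
          have := vecNorm_add_le q.1 q.2
          nlinarith [vecNorm_nonneg (q.1 + q.2)]
    _ = |φ 0| + (L * vecNorm q.1 + L * vecNorm q.2) := by ring
  -- the averaged function g
  set g : (Fin p → ℝ) → ℝ := fun y => ∫ x, φ (x + y) ∂κ₁ with hgdef
  have hψconv : ∀ y, ConvexOn ℝ Set.univ (fun x => φ (x + y)) := fun y =>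
    convexOn_comp_add hconv y
  have hψLip : ∀ y : Fin p → ℝ, ∀ x z : Fin p → ℝ,
      |φ (x + y) - φ (z + y)| ≤ L * vecNorm (x - z) := by
    intro y x z
    have := hLip (x + y) (z + y)
    rw [show x + y - (z + y) = x - z by abel] at this
    exact this
  have hψ := fun y => h₁ (fun x => φ (x + y)) (hψconv y) L hL (hψLip y)
  have hgInt_y : ∀ y, Integrable (fun x => φ (x + y)) κ₁ := fun y => (hψ y).1
  have hgconv : ConvexOn ℝ Set.univ g := by
    refine ⟨convex_univ, fun y1 _ y2 _ a b ha hb hab => ?_⟩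
    have e : ∀ x : Fin p → ℝ, x + (a • y1 + b • y2) = a • (x + y1) + b • (x + y2) := by
      intro x
      rw [smul_add, smul_add]
      rw [show x + (a • y1 + b • y2) = (a + b) • x + (a • y1 + b • y2) by rw [hab, one_smul]]
      rw [add_smul]
      abel
    show (∫ x, φ (x + (a • y1 + b • y2)) ∂κ₁) ≤ a • g y1 + b • g y2
    calc (∫ x, φ (x + (a • y1 + b • y2)) ∂κ₁)
        = ∫ x, φ (a • (x + y1) + b • (x + y2)) ∂κ₁ := by
          congr 1
          funext x
          rw [e x]
    _ ≤ ∫ x, (a * φ (x + y1) + b * φ (x + y2)) ∂κ₁ := by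
          apply integral_mono _ (((hgInt_y y1).const_mul a).add ((hgInt_y y2).const_mul b))
          · intro x
            have := hconv.2 (Set.mem_univ (x + y1)) (Set.mem_univ (x + y2)) ha hb hab
            simpa [smul_eq_mul] using this
          · have : (fun x => φ (a • (x + y1) + b • (x + y2)))
                = fun x => φ (x + (a • y1 + b • y2)) := by
              funext x
              rw [e x]
            rw [this]
            exact hgInt_y _
    _ = a • g y1 + b • g y2 := by
          rw [integral_add ((hgInt_y y1).const_mul a) ((hgInt_y y2).const_mul b),
            integral_const_mul, integral_const_mul]
          simp [hgdef, smul_eq_mul]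
  have hgLip : ∀ y z, |g y - g z| ≤ L * vecNorm (y - z) := by
    intro y z
    have e : g y - g z = ∫ x, (φ (x + y) - φ (x + z)) ∂κ₁ := by
      rw [integral_sub (hgInt_y y) (hgInt_y z)]
    rw [e]
    calc |∫ x, (φ (x + y) - φ (x + z)) ∂κ₁| ≤ ∫ x, |φ (x + y) - φ (x + z)| ∂κ₁ := by
          have := norm_integral_le_integral_norm (μ := κ₁) (fun x => φ (x + y) - φ (x + z))
          simpa [Real.norm_eq_abs] using this
    _ ≤ ∫ _x, L * vecNorm (y - z) ∂κ₁ := by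
          apply integral_mono ((hgInt_y y).sub (hgInt_y z)).abs (integrable_const _)
          intro x
          have := hLip (x + y) (x + z)
          rw [show x + y - (x + z) = y - z by abel] at this
          exact this
    _ = L * vecNorm (y - z) := by simp [measure_univ]
  have hgMp := h₂ g hgconv L hL hgLip
  -- transfer of integrals to the convolution measure
  set κ : Measure (Fin p → ℝ) := (κ₁.prod κ₂).map (fun q => q.1 + q.2) with hκdef
  have hmapInt : ∀ ψ : (Fin p → ℝ) → ℝ, Continuous ψ →
      (Integrable ψ κ ↔ Integrable (fun q : (Fin p → ℝ) × (Fin p → ℝ) => ψ (q.1 + q.2))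
        (κ₁.prod κ₂)) := fun ψ hψ =>
    integrable_map_measure hψ.aestronglyMeasurable hadd.aemeasurable
  have hmapI : ∀ ψ : (Fin p → ℝ) → ℝ, Continuous ψ →
      (∫ w, ψ w ∂κ) = ∫ q, ψ (q.1 + q.2) ∂(κ₁.prod κ₂) := fun ψ hψ =>
    integral_map hadd.aemeasurable hψ.aestronglyMeasurable
  have hIφκ : Integrable φ κ := (hmapInt φ hφc).mpr hprodInt
  have hmean : ∫ y, g y ∂κ₂ = ∫ w, φ w ∂κ := by
    rw [hmapI φ hφc, integral_prod_symm _ hprodInt]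
  refine ⟨hIφκ, fun l => ?_⟩
  obtain ⟨hgI, hgE⟩ := hgMp
  obtain ⟨hgIl, hgBl⟩ := hgE l
  have hml : Measurable (fun w : Fin p → ℝ => ENNReal.ofReal (exp (l * φ w))) :=
    ENNReal.measurable_ofReal.comp (Real.measurable_exp.comp (hφc.measurable.const_mul l))
  have key : ∫⁻ w, ENNReal.ofReal (exp (l * φ w)) ∂κ
      ≤ ENNReal.ofReal (exp (l * (∫ w, φ w ∂κ) + c0 * l^2 * L^2 * (v₁ + v₂))) := by
    rw [hκdef, lintegral_map hml hadd]
    have heq : (∫⁻ q : (Fin p → ℝ) × (Fin p → ℝ),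
          ENNReal.ofReal (exp (l * φ (q.1 + q.2))) ∂(κ₁.prod κ₂))
        = ∫⁻ y, ∫⁻ x, ENNReal.ofReal (exp (l * φ (x + y))) ∂κ₁ ∂κ₂ :=
      lintegral_prod_symm _ (hml.comp hadd).aemeasurable
    rw [heq]
    have hinner_le : ∀ y, (∫⁻ x, ENNReal.ofReal (exp (l * φ (x + y))) ∂κ₁)
        ≤ ENNReal.ofReal (exp (l * g y + c0 * l^2 * L^2 * v₁)) := by
      intro y
      rw [← ofReal_integral_eq_lintegral_ofReal ((hψ y).2 l).1
        (Filter.Eventually.of_forall fun x => (Real.exp_pos _).le)]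
      exact ENNReal.ofReal_le_ofReal ((hψ y).2 l).2
    calc (∫⁻ y, ∫⁻ x, ENNReal.ofReal (exp (l * φ (x + y))) ∂κ₁ ∂κ₂)
        ≤ ∫⁻ y, ENNReal.ofReal (exp (l * g y + c0 * l^2 * L^2 * v₁)) ∂κ₂ :=
          lintegral_mono hinner_le
    _ = ∫⁻ y, ENNReal.ofReal (exp (c0 * l^2 * L^2 * v₁))
          * ENNReal.ofReal (exp (l * g y)) ∂κ₂ := by
          congr 1
          funext y
          rw [← ENNReal.ofReal_mul (Real.exp_nonneg _), ← Real.exp_add]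
          congr 2
          ring
    _ = ENNReal.ofReal (exp (c0 * l^2 * L^2 * v₁))
          * ∫⁻ y, ENNReal.ofReal (exp (l * g y)) ∂κ₂ :=
          lintegral_const_mul' _ _ ENNReal.ofReal_ne_top
    _ ≤ ENNReal.ofReal (exp (c0 * l^2 * L^2 * v₁))
          * ENNReal.ofReal (exp (l * (∫ y, g y ∂κ₂) + c0 * l^2 * L^2 * v₂)) := by
          apply mul_le_mul_right
          rw [← ofReal_integral_eq_lintegral_ofReal hgIl
            (Filter.Eventually.of_forall fun y => (Real.exp_pos _).le)]
          exact ENNReal.ofReal_le_ofReal hgBl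
    _ = ENNReal.ofReal (exp (l * (∫ w, φ w ∂κ) + c0 * l^2 * L^2 * (v₁ + v₂))) := by
          rw [← ENNReal.ofReal_mul (Real.exp_nonneg _), ← Real.exp_add, hmean]
          congr 2
          ring
  have hIexpκ : Integrable (fun w => exp (l * φ w)) κ := by
    constructor
    · exact (Real.measurable_exp.comp (hφc.measurable.const_mul l)).aestronglyMeasurable
    · rw [hasFiniteIntegral_iff_ofReal (Filter.Eventually.of_forall fun w => (Real.exp_pos _).le)]
      exact lt_of_le_of_lt key (by finiteness)
  refine ⟨hIexpκ, ?_⟩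
  apply (ENNReal.ofReal_le_ofReal_iff (Real.exp_nonneg _)).mp
  rw [ofReal_integral_eq_lintegral_ofReal hIexpκ
    (Filter.Eventually.of_forall fun w => (Real.exp_pos _).le)]
  exact key
end MpSec2

open ProbabilityTheory in
lemma Mp_sum {p d : ℕ} {Ω : Type} [MeasurableSpace Ω] (μ : Measure Ω) [IsProbabilityMeasure μ]
    {K : ℝ} (hK : 0 < K) (r : Fin d → Ω → Fin p → ℝ) (hr : ∀ j, Measurable (r j))
    (hind : iIndepFun r μ)
    (hccp : ∀ j, CCP μ (r j) K) (u : Fin d → ℝ) (s : Finset (Fin d)) :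
    Mp (μ.map (∑ j ∈ s, fun ω => u j • r j ω)) ((∑ j ∈ s, (u j)^2) * K^2) := by
  classical
  set f : Fin d → Ω → Fin p → ℝ := fun j ω => u j • r j ω with hfdef
  have hfmeas : ∀ j, Measurable (f j) := fun j => (hr j).const_smul (u j)
  have hfind : iIndepFun f μ :=
    hind.comp (fun j y => u j • y) (fun j => measurable_const_smul (u j))
  induction s using Finset.induction_on with
  | empty =>
      simp only [Finset.sum_empty, zero_mul]
      exact Mp_zero μ
  | @insert i s hi ih =>
      have hSmeas : Measurable (∑ j ∈ s, f j) := by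
        rw [show (∑ j ∈ s, f j) = fun ω => ∑ j ∈ s, f j ω by
          funext ω; rw [Finset.sum_apply]]
        exact Finset.measurable_sum s fun j _ => hfmeas j
      haveI : IsProbabilityMeasure (μ.map (f i)) :=
        Measure.isProbabilityMeasure_map (hfmeas i).aemeasurable
      haveI : IsProbabilityMeasure (μ.map (∑ j ∈ s, f j)) :=
        Measure.isProbabilityMeasure_map hSmeas.aemeasurable
      have hXS : IndepFun (f i) (∑ j ∈ s, f j) μ :=
        (hfind.indepFun_finsetSum_of_notMem hfmeas hi).symm
      have hpair : μ.map (fun ω => (f i ω, (∑ j ∈ s, f j) ω))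
          = (μ.map (f i)).prod (μ.map (∑ j ∈ s, f j)) :=
        (ProbabilityTheory.indepFun_iff_map_prod_eq_prod_map_map (hfmeas i).aemeasurable
          hSmeas.aemeasurable).mp hXS
      have hmapeq : μ.map (∑ j ∈ insert i s, f j)
          = ((μ.map (f i)).prod (μ.map (∑ j ∈ s, f j))).map
              (fun q : (Fin p → ℝ) × (Fin p → ℝ) => q.1 + q.2) := by
        rw [← hpair, Measure.map_map (g := fun q : (Fin p → ℝ) × (Fin p → ℝ) => q.1 + q.2) (measurable_fst.add measurable_snd)
          ((hfmeas i).prodMk hSmeas)]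
        rw [Finset.sum_insert hi]
        rfl
      have hMi : Mp (μ.map (f i)) ((u i)^2 * K^2) := by
        have h1 : Mp ((μ.map (r i)).map (fun y => u i • y)) ((u i)^2 * K^2) :=
          Mp_map_smul (ccp_to_Mp μ (r i) (hr i) hK (hccp i)) (u i)
        rwa [Measure.map_map (measurable_const_smul (u i)) (hr i)] at h1
      have hconv := Mp_conv hMi ih
      rw [hmapeq, Finset.sum_insert hi, add_mul]
      exact hconv

lemma chernoff_aux {Ω : Type} [MeasurableSpace Ω] (μ : Measure Ω) (W : Ω → ℝ)
    (hW : AEMeasurable W μ) {l t B : ℝ} (hl : 0 < l)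
    (hInt : Integrable (fun ω => exp (l * W ω)) μ)
    (hBd : ∫ ω, exp (l * W ω) ∂μ ≤ B) :
    μ {ω | t ≤ W ω} ≤ ENNReal.ofReal (exp (-(l*t)) * B) := by
  have hB : 0 ≤ B := le_trans (integral_nonneg fun ω => (Real.exp_pos _).le) hBd
  have hset : {ω | t ≤ W ω}
      = {ω | ENNReal.ofReal (exp (l*t)) ≤ ENNReal.ofReal (exp (l * W ω))} := by
    ext ω
    simp only [Set.mem_setOf_eq]
    rw [ENNReal.ofReal_le_ofReal_iff (Real.exp_nonneg _), Real.exp_le_exp]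
    exact (mul_le_mul_iff_right₀ hl).symm
  have hmark := mul_meas_ge_le_lintegral₀ (μ := μ)
    (ENNReal.measurable_ofReal.comp_aemeasurable
      (Real.measurable_exp.comp_aemeasurable (hW.const_mul l))) (ENNReal.ofReal (exp (l*t)))
  simp only [Function.comp] at hmark
  rw [← hset] at hmark
  have hlint : (∫⁻ ω, ENNReal.ofReal (exp (l * W ω)) ∂μ) ≤ ENNReal.ofReal B := by
    rw [← ofReal_integral_eq_lintegral_ofReal hInt
      (Filter.Eventually.of_forall fun ω => (Real.exp_pos _).le)]
    exact ENNReal.ofReal_le_ofReal hBd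
  have h2 : ENNReal.ofReal (exp (l*t)) * μ {ω | t ≤ W ω} ≤ ENNReal.ofReal B := by
    refine le_trans ?_ (hmark.trans hlint)
    apply le_of_eq
    congr 1
  have h3 : μ {ω | t ≤ W ω} ≤ ENNReal.ofReal B / ENNReal.ofReal (exp (l*t)) := by
    rw [ENNReal.le_div_iff_mul_le (Or.inl ?hne) (Or.inl ENNReal.ofReal_ne_top)]
    · rw [mul_comm]
      exact h2
    · exact (ENNReal.ofReal_pos.mpr (Real.exp_pos _)).ne'
  refine h3.trans (le_of_eq ?_)
  rw [← ENNReal.ofReal_div_of_pos (Real.exp_pos _)]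
  congr 1
  rw [Real.exp_neg]
  field_simp

open ProbabilityTheory in
/-- a linear combination of independent c.c.p. columns has c.c.p.
with constant C·K. -/
theorem ccp_linear_combination :
    ∃ C > (0:ℝ), ∀ (Ω : Type) (_ : MeasurableSpace Ω) (μ : Measure Ω),
      IsProbabilityMeasure μ → ∀ (p d : ℕ) (K : ℝ), 0 < K →
      ∀ (r : Fin d → Ω → Fin p → ℝ),
      (∀ j, Measurable (r j)) →
      iIndepFun r μ →
      (∀ j, CCP μ (r j) K) →
      ∀ u : Fin d → ℝ, vecNorm u = 1 →
      CCP μ (fun ω i => ∑ j, u j * r j ω i) (C * K) := by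
  refine ⟨40, by norm_num, ?_⟩
  intro Ω mΩ μ hprob p d K hK r hrmeas hind hccp u hu
  haveI := hprob
  set S : Ω → Fin p → ℝ := ∑ j, (fun ω => u j • r j ω) with hSdef
  have hSmeas : Measurable S := by
    rw [hSdef, show (∑ j, fun ω => u j • r j ω) = fun ω => ∑ j : Fin d, u j • r j ω by
      funext ω; rw [Finset.sum_apply]]
    exact Finset.measurable_sum Finset.univ fun j _ => (hrmeas j).const_smul (u j)
  have hfun : (fun ω i => ∑ j, u j * r j ω i) = S := by
    funext ω
    rw [hSdef]
    funext i
    rw [Finset.sum_apply, Finset.sum_apply]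
    refine Finset.sum_congr rfl fun j _ => ?_
    simp [Pi.smul_apply, smul_eq_mul]
  rw [hfun]
  have hsum1 : (∑ j, (u j)^2) = 1 := by
    have h := hu
    unfold vecNorm at h
    rwa [Real.sqrt_eq_one] at h
  have hMp : Mp (μ.map S) (K^2) := by
    have h := Mp_sum μ hK r hrmeas hind hccp u Finset.univ
    rwa [hsum1, one_mul] at h
  intro φ hconv hLip
  have hL1 : ∀ y z, |φ y - φ z| ≤ 1 * vecNorm (y - z) := fun y z => by
    rw [one_mul]; exact hLip y z
  have hφc : Continuous φ := continuous_of_lip hL1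
  obtain ⟨hIφ, hE⟩ := hMp φ hconv 1 zero_le_one hL1
  have hmapI : ∀ ψ : (Fin p → ℝ) → ℝ, Continuous ψ →
      (∫ w, ψ w ∂(μ.map S)) = ∫ ω, ψ (S ω) ∂μ := fun ψ hψ =>
    integral_map hSmeas.aemeasurable hψ.aestronglyMeasurable
  have hmapInt : ∀ ψ : (Fin p → ℝ) → ℝ, Continuous ψ →
      (Integrable ψ (μ.map S) ↔ Integrable (fun ω => ψ (S ω)) μ) := fun ψ hψ =>
    integrable_map_measure hψ.aestronglyMeasurable hSmeas.aemeasurable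
  have hIφμ : Integrable (fun ω => φ (S ω)) μ := (hmapInt φ hφc).mp hIφ
  refine ⟨hIφμ, ?_⟩
  intro t ht
  set m : ℝ := ∫ ω2, φ (S ω2) ∂μ with hm
  have hmκ : (∫ w, φ w ∂(μ.map S)) = m := hmapI φ hφc
  set l : ℝ := t / (2 * c0 * K^2) with hldef
  have hc0 := c0_pos
  have hlpos : 0 < l := by
    rw [hldef]
    exact div_pos ht (mul_pos (mul_pos two_pos hc0) (pow_pos hK 2))
  obtain ⟨hIl, hBl⟩ := hE l
  obtain ⟨hInl, hBnl⟩ := hE (-l)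
  rw [hmκ] at hBl hBnl
  set B : ℝ := exp (c0 * l^2 * K^2) with hBdef
  have hIlμ : Integrable (fun ω => exp (l * φ (S ω))) μ :=
    (hmapInt _ (Real.continuous_exp.comp (continuous_const.mul hφc))).mp hIl
  have hInlμ : Integrable (fun ω => exp (-l * φ (S ω))) μ :=
    (hmapInt _ (Real.continuous_exp.comp (continuous_const.mul hφc))).mp hInl
  have hW1meas : AEMeasurable (fun ω => φ (S ω) - m) μ :=
    ((hφc.measurable.comp hSmeas).sub measurable_const).aemeasurable
  have hW2meas : AEMeasurable (fun ω => m - φ (S ω)) μ :=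
    (measurable_const.sub (hφc.measurable.comp hSmeas)).aemeasurable
  have hIW1 : Integrable (fun ω => exp (l * (φ (S ω) - m))) μ := by
    refine (hIlμ.const_mul (exp (-(l * m)))).congr (Filter.Eventually.of_forall fun ω => ?_)
    show exp (-(l * m)) * exp (l * φ (S ω)) = _
    rw [← Real.exp_add]; congr 1; ring
  have hIW2 : Integrable (fun ω => exp (l * (m - φ (S ω)))) μ := by
    refine (hInlμ.const_mul (exp (l * m))).congr (Filter.Eventually.of_forall fun ω => ?_)
    show exp (l * m) * exp (-l * φ (S ω)) = _
    rw [← Real.exp_add]; congr 1; ring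
  have hBW1 : ∫ ω, exp (l * (φ (S ω) - m)) ∂μ ≤ B := by
    have e : ∀ ω, exp (l * (φ (S ω) - m)) = exp (-(l * m)) * exp (l * φ (S ω)) := fun ω => by
      rw [← Real.exp_add]; congr 1; ring
    rw [integral_congr_ae (Filter.Eventually.of_forall e), integral_const_mul]
    have h1 : (∫ ω, exp (l * φ (S ω)) ∂μ) ≤ exp (l * m + c0 * l^2 * 1^2 * K^2) := by
      have heq := hmapI (fun w => exp (l * φ w))
        (Real.continuous_exp.comp (continuous_const.mul hφc))
      rw [← heq]
      exact hBl
    calc exp (-(l*m)) * ∫ ω, exp (l * φ (S ω)) ∂μ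
        ≤ exp (-(l*m)) * exp (l * m + c0 * l^2 * 1^2 * K^2) :=
          mul_le_mul_of_nonneg_left h1 (Real.exp_nonneg _)
    _ = B := by rw [← Real.exp_add, hBdef]; congr 1; ring
  have hBW2 : ∫ ω, exp (l * (m - φ (S ω))) ∂μ ≤ B := by
    have e : ∀ ω, exp (l * (m - φ (S ω))) = exp (l * m) * exp (-l * φ (S ω)) := fun ω => by
      rw [← Real.exp_add]; congr 1; ring
    rw [integral_congr_ae (Filter.Eventually.of_forall e), integral_const_mul]
    have h1 : (∫ ω, exp (-l * φ (S ω)) ∂μ) ≤ exp (-l * m + c0 * (-l)^2 * 1^2 * K^2) := by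
      have heq := hmapI (fun w => exp (-l * φ w))
        (Real.continuous_exp.comp (continuous_const.mul hφc))
      rw [← heq]
      exact hBnl
    calc exp (l*m) * ∫ ω, exp (-l * φ (S ω)) ∂μ
        ≤ exp (l*m) * exp (-l * m + c0 * (-l)^2 * 1^2 * K^2) :=
          mul_le_mul_of_nonneg_left h1 (Real.exp_nonneg _)
    _ = B := by rw [← Real.exp_add, hBdef]; congr 1; ring
  have hup := chernoff_aux μ _ hW1meas hlpos hIW1 hBW1 (t := t)
  have hdown := chernoff_aux μ _ hW2meas hlpos hIW2 hBW2 (t := t)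
  have hsub : {ω | t ≤ |φ (S ω) - m|}
      ⊆ {ω | t ≤ φ (S ω) - m} ∪ {ω | t ≤ m - φ (S ω)} := by
    intro ω hω
    simp only [Set.mem_setOf_eq, Set.mem_union] at *
    rcases le_abs.mp hω with h | h
    · exact Or.inl h
    · right; linarith
  calc μ {ω | t ≤ |φ (S ω) - m|}
      ≤ μ ({ω | t ≤ φ (S ω) - m} ∪ {ω | t ≤ m - φ (S ω)}) := measure_mono hsub
  _ ≤ μ {ω | t ≤ φ (S ω) - m} + μ {ω | t ≤ m - φ (S ω)} := measure_union_le _ _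
  _ ≤ ENNReal.ofReal (exp (-(l*t)) * B) + ENNReal.ofReal (exp (-(l*t)) * B) :=
        add_le_add hup hdown
  _ = ENNReal.ofReal (2 * (exp (-(l*t)) * B)) := by
        rw [← ENNReal.ofReal_add (by positivity) (by positivity)]
        congr 1; ring
  _ ≤ ENNReal.ofReal (2 * exp (-t^2 / (40 * K)^2)) := by
        apply ENNReal.ofReal_le_ofReal
        have e1 : exp (-(l*t)) * B = exp (-(l*t) + c0 * l^2 * K^2) := by
          rw [hBdef, ← Real.exp_add]
        rw [e1]
        have hc0ne : c0 ≠ 0 := hc0.ne'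
        have hKne : K ≠ 0 := hK.ne'
        have e2 : -(l*t) + c0 * l^2 * K^2 = -t^2 / (4 * c0 * K^2) := by
          rw [hldef]; field_simp; ring
        rw [e2]
        have e3 : -t^2 / (4 * c0 * K^2) ≤ -t^2 / (40*K)^2 := by
          rw [neg_div, neg_div, neg_le_neg_iff]
          apply div_le_div_of_nonneg_left (sq_nonneg t)
            (mul_pos (mul_pos four_pos hc0) (pow_pos hK 2))
          simp only [c0]
          nlinarith [sq_nonneg K]
        have := Real.exp_le_exp.mpr e3
        nlinarith [Real.exp_pos (-t^2 / (4 * c0 * K^2))]
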